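/- Let G be a CDF on [0,∞) with density and finite mean, H = sup{x: G(x)<1}, and let μ be a finite measure on [0,H) such that for every bounded continuous f and t ≥ 0: ∫ f dμ = ∫ f(x+t)((1-G(x+t))/(1-G(x))) μ(dx) + κ ∫_0^t f(s)(1-G(s)) ds, for some constant κ ≥ 0. Then μ(dx) = κ(1-G(x))dx. -/

import Mathlib

open Set MeasureTheory Filter Topology NNReal ENNReal

/-- Let `G` be a CDF on `[0,∞)` with density and finite mean, `H = sup{x : G(x) < 1}`, and
let `μ` be a finite measure on `[0,H)` such that for every bounded continuous `f` and `t ≥ 0`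
`∫ f dμ = ∫ f(x+t) (1-G(x+t))/(1-G(x)) μ(dx) + κ ∫_0^t f(s)(1-G(s)) ds` for some constant
`κ ≥ 0`.  Then `μ(dx) = κ (1 - G(x)) dx`. -/
theorem stmt10 (G g : ℝ → ℝ) (κ : ℝ) (μ : Measure ℝ) [IsFiniteMeasure μ]
    (hκ : 0 ≤ κ)
    (hGcont : Continuous G) (hGmono : Monotone G)
    (hG0 : G 0 = 0) (hG1 : ∀ x, G x ≤ 1)
    (hgnn : ∀ x, 0 ≤ g x)
    (hdens : ∀ x, G x = ∫ y in (0:ℝ)..x, g y)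
    (hmean : IntegrableOn (fun x => 1 - G x) (Ioi 0))
    (hsupp0 : μ (Iio 0) = 0) (hsuppH : μ {x : ℝ | 1 ≤ G x} = 0)
    (hinv : ∀ f : ℝ → ℝ, Continuous f → (∃ M, ∀ x, |f x| ≤ M) → ∀ t : ℝ, 0 ≤ t →
      (∫ x, f x ∂μ)
        = (∫ x, f (x + t) * ((1 - G (x + t)) / (1 - G x)) ∂μ)
          + κ * ∫ s in (0:ℝ)..t, f s * (1 - G s)) :
    μ = (volume.restrict (Ioi 0)).withDensity
      (fun x => ENNReal.ofReal (κ * (1 - G x))) := by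
  set ν : Measure ℝ := (volume.restrict (Ioi 0)).withDensity
      (fun x => ENNReal.ofReal (κ * (1 - G x))) with hν
  have hGnn : ∀ x, 0 ≤ 1 - G x := fun x => by linarith [hG1 x]
  -- κ·(1-G) is integrable on Ioi 0
  have hκG_int : IntegrableOn (fun x => κ * (1 - G x)) (Ioi 0) := hmean.const_mul κ
  -- G tends to 1 at infinity
  have hGlim : Tendsto G atTop (𝓝 1) := by
    have hbdd : BddAbove (range G) := ⟨1, by rintro _ ⟨x, rfl⟩; exact hG1 x⟩
    have htend : Tendsto G atTop (𝓝 (⨆ x, G x)) := tendsto_atTop_ciSup hGmono hbdd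
    have hle : (⨆ x, G x) ≤ 1 := ciSup_le hG1
    rcases eq_or_lt_of_le hle with h | h
    · rwa [h] at htend
    · exfalso
      have key := hmean.measure_ge_lt_top (by linarith : (0:ℝ) < 1 - (⨆ x, G x))
      have hall : {x : ℝ | 1 - (⨆ x, G x) ≤ 1 - G x} = univ := by
        ext x; simp only [mem_setOf_eq, mem_univ, iff_true]
        have : G x ≤ ⨆ x, G x := le_ciSup hbdd x
        linarith
      rw [hall] at key
      simp [Measure.restrict_apply_univ, Real.volume_Ioi] at key
  have hGlim1 : Tendsto (fun n : ℕ => 1 - G (n : ℝ)) atTop (𝓝 0) := by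
    have := (tendsto_const_nhds (x := (1:ℝ))).sub (hGlim.comp tendsto_natCast_atTop_atTop)
    simpa using this
  -- ν is a finite measure
  have hνfin : IsFiniteMeasure ν := by
    constructor
    have : ν univ = ∫⁻ x, ENNReal.ofReal (κ * (1 - G x)) ∂(volume.restrict (Ioi 0)) := by
      rw [hν, withDensity_apply _ MeasurableSet.univ, Measure.restrict_univ]
    rw [this, ← ofReal_integral_eq_lintegral_ofReal hκG_int
      (ae_of_all _ fun x => mul_nonneg hκ (hGnn x))]
    exact ENNReal.ofReal_lt_top
  -- Main identity: for every bounded continuous f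
  have key : ∀ f : ℝ → ℝ, Continuous f → (∃ M, ∀ x, |f x| ≤ M) →
      (∫ x, f x ∂μ) = κ * ∫ x in Ioi (0:ℝ), f x * (1 - G x) := by
    intro f hf ⟨M, hM⟩
    have hM0 : 0 ≤ M := le_trans (abs_nonneg _) (hM 0)
    -- integrability of f·(1-G) on Ioi 0
    have hfG_int : IntegrableOn (fun s => f s * (1 - G s)) (Ioi 0) :=
      hmean.bdd_mul (c := M) hf.aestronglyMeasurable (ae_of_all _ fun x => by
        rw [Real.norm_eq_abs]; exact hM x)
    -- ratio is between 0 and 1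
    have hratio : ∀ x t : ℝ, 0 ≤ t → (1 - G (x + t)) / (1 - G x) ∈ Icc (0:ℝ) 1 := by
      intro x t ht
      rcases eq_or_lt_of_le (hGnn x) with h | h
      · rw [← h]; simp
      · constructor
        · exact div_nonneg (hGnn _) (le_of_lt h)
        · rw [div_le_one h]
          have := hGmono (le_add_of_nonneg_right ht : x ≤ x + t)
          linarith
    -- first term tends to 0
    have h1 : Tendsto (fun n : ℕ =>
        ∫ x, f (x + n) * ((1 - G (x + n)) / (1 - G x)) ∂μ) atTop (𝓝 0) := by
      have := MeasureTheory.tendsto_integral_of_dominated_convergence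
        (F := fun (n : ℕ) (x : ℝ) => f (x + n) * ((1 - G (x + n)) / (1 - G x)))
        (f := fun _ : ℝ => (0:ℝ)) (bound := fun _ => M) (μ := μ)
        (fun n => ((hf.comp (continuous_add_right (n:ℝ))).aestronglyMeasurable.mul
          (((continuous_const.sub (hGcont.comp (continuous_add_right (n:ℝ)))).measurable.div
            (continuous_const.sub hGcont).measurable).aestronglyMeasurable)))
        (integrable_const M)
        (fun n => ae_of_all _ fun x => by
          have hr := hratio x n (Nat.cast_nonneg n)
          rw [Real.norm_eq_abs, abs_mul, abs_of_nonneg hr.1]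
          calc |f (x + n)| * ((1 - G (x + n)) / (1 - G x)) ≤ M * 1 :=
                mul_le_mul (hM _) hr.2 hr.1 hM0
            _ = M := mul_one M)
        ?_
      · simpa using this
      · -- a.e. pointwise convergence to 0
        have hae0 : ∀ᵐ x ∂μ, ¬ x < 0 := by
          rw [ae_iff]; simpa [Iio] using hsupp0
        have haeH : ∀ᵐ x ∂μ, ¬ (1 ≤ G x) := by
          rw [ae_iff]; simpa using hsuppH
        filter_upwards [hae0, haeH] with x hx0 hxH
        have hx0' : 0 ≤ x := not_lt.mp hx0
        have hxH' : G x < 1 := not_le.mp hxH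
        have hd : 0 < 1 - G x := by linarith
        apply squeeze_zero_norm (a := fun n : ℕ => (M / (1 - G x)) * (1 - G (n:ℝ)))
        · intro n
          have hr := hratio x n (Nat.cast_nonneg n)
          rw [Real.norm_eq_abs, abs_mul, abs_of_nonneg hr.1]
          have hmono : 1 - G (x + n) ≤ 1 - G (n:ℝ) := by
            have := hGmono (le_add_of_nonneg_left hx0' : (n:ℝ) ≤ x + n)
            linarith
          calc |f (x + n)| * ((1 - G (x + n)) / (1 - G x))
              ≤ M * ((1 - G (n:ℝ)) / (1 - G x)) := by
                apply mul_le_mul (hM _) _ hr.1 hM0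
                exact div_le_div_of_nonneg_right hmono hd.le
            _ = (M / (1 - G x)) * (1 - G (n:ℝ)) := by ring
        · simpa using hGlim1.const_mul (M / (1 - G x))
    -- second term converges
    have h2 : Tendsto (fun n : ℕ => κ * ∫ s in (0:ℝ)..(n:ℝ), f s * (1 - G s)) atTop
        (𝓝 (κ * ∫ x in Ioi (0:ℝ), f x * (1 - G x))) :=
      (intervalIntegral_tendsto_integral_Ioi 0 hfG_int tendsto_natCast_atTop_atTop).const_mul κ
    have heq : ∀ n : ℕ, (∫ x, f (x + n) * ((1 - G (x + n)) / (1 - G x)) ∂μ)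
          + κ * ∫ s in (0:ℝ)..(n:ℝ), f s * (1 - G s) = ∫ x, f x ∂μ :=
      fun n => (hinv f hf ⟨M, hM⟩ n (Nat.cast_nonneg n)).symm
    have hconst : Tendsto (fun _ : ℕ => ∫ x, f x ∂μ) atTop
        (𝓝 (0 + κ * ∫ x in Ioi (0:ℝ), f x * (1 - G x))) :=
      Filter.Tendsto.congr heq (h1.add h2)
    have := tendsto_nhds_unique tendsto_const_nhds hconst
    rwa [zero_add] at this
  -- the corresponding identity for ν
  have keyν : ∀ f : ℝ → ℝ, Continuous f → (∫ x, f x ∂ν)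
      = κ * ∫ x in Ioi (0:ℝ), f x * (1 - G x) := by
    intro f hf
    have hmeas : Measurable fun x => Real.toNNReal (κ * (1 - G x)) :=
      (measurable_const.mul (measurable_const.sub hGcont.measurable)).real_toNNReal
    have : (fun x => ENNReal.ofReal (κ * (1 - G x)))
        = fun x => ((Real.toNNReal (κ * (1 - G x)) : ℝ≥0) : ℝ≥0∞) := rfl
    rw [hν, this, integral_withDensity_eq_integral_smul hmeas]
    rw [← MeasureTheory.integral_const_mul]
    apply setIntegral_congr_fun measurableSet_Ioi
    intro x _
    simp only [NNReal.smul_def, Real.coe_toNNReal _ (mul_nonneg hκ (hGnn x)), smul_eq_mul]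
    ring
  -- conclude by extensionality
  have := hνfin
  apply ext_of_forall_lintegral_eq_of_IsFiniteMeasure
  intro f
  have hint_μ : Integrable (fun x => (f x : ℝ)) μ :=
    BoundedContinuousFunction.integrable_of_nnreal μ f
  have hint_ν : Integrable (fun x => (f x : ℝ)) ν :=
    BoundedContinuousFunction.integrable_of_nnreal ν f
  rw [lintegral_coe_eq_integral f hint_μ, lintegral_coe_eq_integral f hint_ν]
  congr 1
  have hfc : Continuous fun x => (f x : ℝ) := NNReal.continuous_coe.comp f.continuous
  have hfb : ∃ M, ∀ x, |(f x : ℝ)| ≤ M := by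
    refine ⟨nndist 0 f, fun x => ?_⟩
    rw [abs_of_nonneg (f x).coe_nonneg]
    exact_mod_cast f.apply_le_nndist_zero x
  rw [key _ hfc hfb, keyν _ hfc]
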